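/- (Reversible work, Eq. (10).) In the setting of Theorem 1 — β > 0, H : ℝ → Matrix n n ℂ a continuously differentiable family of Hermitian matrices, ρ : ℝ → Matrix n n ℂ a continuously differentiable family of positive definite density matrices, with ΔW = ∫₀^τ Re tr(ρ_t · H'_t) dt, ΔQ = ∫₀^τ Re tr(ρ'_t · H_t) dt, Δ_iS = S(ρ_τ) − S(ρ_0) − β·ΔQ, ΔI = S(ρ_τ‖ρ^β_τ) − S(ρ_0‖ρ^β_0), ΔF^β = F^β_τ − F^β_0 — if the process is reversible, i.e. Δ_iS = 0, then ΔW = (1/β)·ΔI + ΔF^β. -/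

import Mathlib

open scoped ComplexOrder

attribute [local instance] Matrix.normedAddCommGroup Matrix.normedSpace

/-- The matrix exponential of an `n × n` complex matrix. -/
noncomputable def matExp {n : ℕ} (A : Matrix (Fin n) (Fin n) ℂ) : Matrix (Fin n) (Fin n) ℂ :=
  NormedSpace.exp A

/-- The matrix logarithm, given by the continuous functional calculus (the real
logarithm applied to the eigenvalues of a Hermitian matrix). -/
noncomputable def matLog {n : ℕ} (A : Matrix (Fin n) (Fin n) ℂ) : Matrix (Fin n) (Fin n) ℂ :=
  cfc Real.log A

/-- The von Neumann entropy `S(ρ) = −Re tr(ρ log ρ)`. -/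
noncomputable def vnEntropy {n : ℕ} (ρ : Matrix (Fin n) (Fin n) ℂ) : ℝ :=
  -(Matrix.trace (ρ * matLog ρ)).re

/-- The relative entropy `S(ρ‖σ) = Re tr(ρ log ρ) − Re tr(ρ log σ)`. -/
noncomputable def relEntropy {n : ℕ} (ρ σ : Matrix (Fin n) (Fin n) ℂ) : ℝ :=
  (Matrix.trace (ρ * matLog ρ)).re - (Matrix.trace (ρ * matLog σ)).re

/-- The partition function `Z = Re tr(exp(−βH))`. -/
noncomputable def partZ {n : ℕ} (β : ℝ) (H : Matrix (Fin n) (Fin n) ℂ) : ℝ :=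
  (Matrix.trace (matExp ((-β) • H))).re

/-- The Gibbs state `ρ^β = exp(−βH)/Z`. -/
noncomputable def gibbs {n : ℕ} (β : ℝ) (H : Matrix (Fin n) (Fin n) ℂ) :
    Matrix (Fin n) (Fin n) ℂ :=
  (partZ β H)⁻¹ • matExp ((-β) • H)

/-! ### Auxiliary lemmas -/

lemma entry_hasDerivAt {n : ℕ} {f : ℝ → Matrix (Fin n) (Fin n) ℂ}
    {f' : Matrix (Fin n) (Fin n) ℂ} {t : ℝ}
    (h : HasDerivAt f f' t) (i j : Fin n) :
    HasDerivAt (fun s => f s i j) (f' i j) t := by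
  have := ((Matrix.entryLinearMap ℝ ℂ i j).toContinuousLinearMap.hasFDerivAt).comp_hasDerivAt t h
  exact this

lemma trace_mul_re_hasDerivAt {n : ℕ} {H ρ : ℝ → Matrix (Fin n) (Fin n) ℂ}
    (hH : ContDiff ℝ 1 H) (hρ : ContDiff ℝ 1 ρ) (t : ℝ) :
    HasDerivAt (fun s => (Matrix.trace (ρ s * H s)).re)
      ((Matrix.trace (deriv ρ t * H t)).re + (Matrix.trace (ρ t * deriv H t)).re) t := by
  have hdρ : HasDerivAt ρ (deriv ρ t) t := (hρ.differentiable one_ne_zero t).hasDerivAt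
  have hdH : HasDerivAt H (deriv H t) t := (hH.differentiable one_ne_zero t).hasDerivAt
  have key : ∀ i j : Fin n, HasDerivAt (fun s => ((ρ s i j) * (H s j i)).re)
      ((deriv ρ t i j * H t j i + ρ t i j * deriv H t j i).re) t := fun i j =>
    Complex.reCLM.hasFDerivAt.comp_hasDerivAt t
      ((entry_hasDerivAt hdρ i j).mul (entry_hasDerivAt hdH j i))
  have hsum : HasDerivAt (fun s => ∑ i, ∑ j, ((ρ s i j) * (H s j i)).re)
      (∑ i, ∑ j, (deriv ρ t i j * H t j i + ρ t i j * deriv H t j i).re) t :=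
    HasDerivAt.fun_sum fun i _ => HasDerivAt.fun_sum fun j _ => key i j
  have hfun : (fun s => (Matrix.trace (ρ s * H s)).re)
      = fun s => ∑ i, ∑ j, ((ρ s i j) * (H s j i)).re := by
    funext s
    simp [Matrix.trace, Matrix.mul_apply, Matrix.diag, Complex.re_sum]
  have hval : (Matrix.trace (deriv ρ t * H t)).re + (Matrix.trace (ρ t * deriv H t)).re
      = ∑ i, ∑ j, (deriv ρ t i j * H t j i + ρ t i j * deriv H t j i).re := by
    simp [Matrix.trace, Matrix.mul_apply, Matrix.diag, Complex.re_sum, Complex.add_re,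
      Finset.sum_add_distrib]
  rw [hfun, hval]
  exact hsum

lemma energy_ftc {n : ℕ} {H ρ : ℝ → Matrix (Fin n) (Fin n) ℂ}
    (hH : ContDiff ℝ 1 H) (hρ : ContDiff ℝ 1 ρ) (τ : ℝ) :
    (∫ t in (0:ℝ)..τ, (Matrix.trace (ρ t * deriv H t)).re)
      + ∫ t in (0:ℝ)..τ, (Matrix.trace (deriv ρ t * H t)).re
    = (Matrix.trace (ρ τ * H τ)).re - (Matrix.trace (ρ 0 * H 0)).re := by
  have hc1 : Continuous fun t => (Matrix.trace (deriv ρ t * H t)).re :=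
    Complex.continuous_re.comp (((hρ.continuous_deriv le_rfl).matrix_mul
      hH.continuous).matrix_trace)
  have hc2 : Continuous fun t => (Matrix.trace (ρ t * deriv H t)).re :=
    Complex.continuous_re.comp ((hρ.continuous.matrix_mul
      (hH.continuous_deriv le_rfl)).matrix_trace)
  have hint : IntervalIntegrable
      (fun t => (Matrix.trace (deriv ρ t * H t)).re + (Matrix.trace (ρ t * deriv H t)).re)
      MeasureTheory.volume 0 τ := (hc1.add hc2).intervalIntegrable _ _
  have hftc := intervalIntegral.integral_eq_sub_of_hasDerivAt
    (fun t _ => trace_mul_re_hasDerivAt hH hρ t) hint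
  rw [intervalIntegral.integral_add (hc1.intervalIntegrable _ _)
    (hc2.intervalIntegrable _ _)] at hftc
  linarith [hftc]

lemma matExp_eq_cfc {n : ℕ} {M : Matrix (Fin n) (Fin n) ℂ} (hM : M.IsHermitian) :
    matExp M = cfc Real.exp M := by
  rw [hM.cfc_eq Real.exp]
  set U : Matrix (Fin n) (Fin n) ℂ := (Matrix.IsHermitian.eigenvectorUnitary hM : Matrix (Fin n) (Fin n) ℂ)
  have hU1 : U * star U = 1 := (Matrix.mem_unitaryGroup_iff).mp (Matrix.IsHermitian.eigenvectorUnitary hM).2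
  have hU2 : star U * U = 1 := (Matrix.mem_unitaryGroup_iff').mp (Matrix.IsHermitian.eigenvectorUnitary hM).2
  let u : (Matrix (Fin n) (Fin n) ℂ)ˣ := ⟨U, star U, hU1, hU2⟩
  have hu : (u : Matrix (Fin n) (Fin n) ℂ) = U := rfl
  have hinv : ((u⁻¹ : (Matrix (Fin n) (Fin n) ℂ)ˣ) : Matrix (Fin n) (Fin n) ℂ) = star U := rfl
  have hdecomp : M = (u : Matrix (Fin n) (Fin n) ℂ)
      * Matrix.diagonal (RCLike.ofReal ∘ hM.eigenvalues)
      * ((u⁻¹ : (Matrix (Fin n) (Fin n) ℂ)ˣ) : Matrix (Fin n) (Fin n) ℂ) := by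
    rw [hu, hinv]; exact hM.spectral_theorem
  unfold matExp
  conv_lhs => rw [hdecomp]
  rw [Matrix.exp_units_conj, Matrix.exp_diagonal, hu, hinv]

  unfold Matrix.IsHermitian.cfc
  rw [Unitary.conjStarAlgAut_apply]
  have hdiag : NormedSpace.exp (RCLike.ofReal ∘ hM.eigenvalues : Fin n → ℂ)
      = RCLike.ofReal ∘ Real.exp ∘ hM.eigenvalues := by
    funext i
    rw [Pi.coe_exp]
    simp only [Function.comp_apply]
    rw [← Complex.exp_eq_exp_ℂ]
    exact (Complex.ofReal_exp _).symm
  rw [hdiag]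

lemma trace_cfc_herm {n : ℕ} {M : Matrix (Fin n) (Fin n) ℂ} (hM : M.IsHermitian) (f : ℝ → ℝ) :
    Matrix.trace (cfc f M) = ∑ i, (f (hM.eigenvalues i) : ℂ) := by
  rw [hM.cfc_eq f]
  unfold Matrix.IsHermitian.cfc
  rw [Unitary.conjStarAlgAut_apply]
  rw [Matrix.trace_mul_cycle]
  rw [Matrix.mem_unitaryGroup_iff'.mp (Matrix.IsHermitian.eigenvectorUnitary hM).2, one_mul,
    Matrix.trace_diagonal]
  rfl

lemma partZ_eq {n : ℕ} {β : ℝ} {H : Matrix (Fin n) (Fin n) ℂ}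
    (hA : ((-β) • H).IsHermitian) :
    partZ β H = ∑ i, Real.exp (hA.eigenvalues i) := by
  unfold partZ
  rw [matExp_eq_cfc hA, trace_cfc_herm hA, Complex.re_sum]
  exact Finset.sum_congr rfl fun i _ => Complex.ofReal_re _

lemma smul_isHermitian {n : ℕ} {H : Matrix (Fin n) (Fin n) ℂ} (hH : H.IsHermitian) (r : ℝ) :
    (r • H).IsHermitian := by
  unfold Matrix.IsHermitian at *
  rw [Matrix.conjTranspose_smul, hH]
  congr 1

lemma partZ_pos {n : ℕ} (hn : 0 < n) {β : ℝ} {H : Matrix (Fin n) (Fin n) ℂ}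
    (hH : H.IsHermitian) : 0 < partZ β H := by
  have hA : ((-β) • H).IsHermitian := smul_isHermitian hH (-β)
  rw [partZ_eq hA]
  have : Nonempty (Fin n) := ⟨⟨0, hn⟩⟩
  exact Finset.sum_pos (fun i _ => Real.exp_pos _) Finset.univ_nonempty

lemma matLog_gibbs {n : ℕ} (hn : 0 < n) (β : ℝ) {H : Matrix (Fin n) (Fin n) ℂ}
    (hH : H.IsHermitian) :
    matLog (gibbs β H) = (-(Real.log (partZ β H))) • (1 : Matrix (Fin n) (Fin n) ℂ)
      + (-β) • H := by
  have hA : ((-β) • H).IsHermitian := smul_isHermitian hH (-β)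
  have hAsa : IsSelfAdjoint ((-β) • H) := hA
  have hZ : 0 < partZ β H := partZ_pos hn hH
  set Z := partZ β H with hZdef
  have hgibbs : gibbs β H = cfc (fun x => Z⁻¹ • Real.exp x) ((-β) • H) := by
    unfold gibbs
    rw [matExp_eq_cfc hA, cfc_smul Z⁻¹ Real.exp ((-β) • H)]
  unfold matLog
  rw [hgibbs, ← cfc_comp' Real.log (fun x => Z⁻¹ • Real.exp x) ((-β) • H)
    (by
      apply Real.continuousOn_log.mono
      rintro - ⟨x, -, rfl⟩
      simp only [smul_eq_mul, Set.mem_compl_iff, Set.mem_singleton_iff]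
      positivity)
    (by fun_prop)]
  have hcomp : (fun x => Real.log (Z⁻¹ • Real.exp x)) = fun x : ℝ => (-(Real.log Z)) + x := by
    funext x
    simp only [smul_eq_mul]
    rw [Real.log_mul (inv_ne_zero hZ.ne') (Real.exp_ne_zero x), Real.log_inv, Real.log_exp]
  rw [hcomp, cfc_const_add (-(Real.log Z)) (fun x => x) ((-β) • H), cfc_id' ℝ ((-β) • H), Algebra.algebraMap_eq_smul_one]

lemma relEntropy_gibbs {n : ℕ} (hn : 0 < n) (β : ℝ) {H ρ0 : Matrix (Fin n) (Fin n) ℂ}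
    (hH : H.IsHermitian) (hρtr : Matrix.trace ρ0 = 1) :
    relEntropy ρ0 (gibbs β H)
      = -vnEntropy ρ0 + β * (Matrix.trace (ρ0 * H)).re + Real.log (partZ β H) := by
  unfold relEntropy vnEntropy
  rw [matLog_gibbs hn β hH]
  rw [mul_add, Matrix.trace_add, Matrix.mul_smul, Matrix.mul_smul, mul_one,
    Matrix.trace_smul, Matrix.trace_smul, hρtr]
  simp only [Complex.add_re, Complex.smul_re, smul_eq_mul, Complex.one_re]
  ring

/-- **Reversible work (Eq. (10)).**
In the setting of Theorem 1, if the process is reversible, i.e. the entropy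
production vanishes (`ΔiS = 0`), then `ΔW = (1/β)·ΔI + ΔF^β`. -/
theorem reversible_work_eq {n : ℕ} (hn : 0 < n)
    (β : ℝ) (hβ : 0 < β) (H ρ : ℝ → Matrix (Fin n) (Fin n) ℂ)
    (hH : ContDiff ℝ 1 H) (hHherm : ∀ t, (H t).IsHermitian)
    (hρ : ContDiff ℝ 1 ρ)
    (hρpos : ∀ t, (ρ t).PosDef) (hρtr : ∀ t, Matrix.trace (ρ t) = 1)
    (τ : ℝ) (hτ : 0 ≤ τ)
    (ΔW ΔQ ΔiS ΔI ΔFβ : ℝ)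
    (hW : ΔW = ∫ t in (0:ℝ)..τ, (Matrix.trace (ρ t * deriv H t)).re)
    (hQ : ΔQ = ∫ t in (0:ℝ)..τ, (Matrix.trace (deriv ρ t * H t)).re)
    (hiS : ΔiS = (vnEntropy (ρ τ) - vnEntropy (ρ 0)) - β * ΔQ)
    (hI : ΔI = relEntropy (ρ τ) (gibbs β (H τ)) - relEntropy (ρ 0) (gibbs β (H 0)))
    (hF : ΔFβ = (-(1 / β) * Real.log (partZ β (H τ))) - (-(1 / β) * Real.log (partZ β (H 0))))
    (hrev : ΔiS = 0) :
    ΔW = (1 / β) * ΔI + ΔFβ := by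
  have hftc := energy_ftc hH hρ τ
  rw [← hW, ← hQ] at hftc
  rw [relEntropy_gibbs hn β (hHherm τ) (hρtr τ), relEntropy_gibbs hn β (hHherm 0) (hρtr 0)] at hI
  have hrev' : vnEntropy (ρ τ) - vnEntropy (ρ 0) = β * ΔQ := by
    rw [hiS] at hrev; linarith
  have hβ' : β ≠ 0 := hβ.ne'
  have hS : vnEntropy (ρ τ) = vnEntropy (ρ 0) + β * ΔQ := by linarith
  have key : ΔW = ((Matrix.trace (ρ τ * H τ)).re - (Matrix.trace (ρ 0 * H 0)).re) - ΔQ := by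
    linarith
  rw [key, hI, hF, hS]
  field_simp
  ring
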